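/- Let R be a Noetherian local ring of dimension d with maximal ideal m, and let E be a finitely generated R-module with minimal primes p₁,…,p_r of maximal dimension d. For any additive function φ on the category of finitely generated R-modules of dimension ≤ d which vanishes on modules of dimension < d, one has φ(E) = ∑_{i=1}^r φ(R/p_i) · L(E_{p_i}), where L(E_{p_i}) is the length of the localization E_{p_i} over R_{p_i}. -/

import Mathlib

/-- The length of a module: the Krull dimension of the submodule lattice. -/
noncomputable def moduleLength (R M : Type*) [Ring R] [AddCommGroup M] [Module R M] : ℕ∞ :=
  WithBot.unbotD 0 (Order.krullDim (Submodule R M))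

/-- The dimension of a module: the Krull dimension of `R / Ann M`. -/
noncomputable def moduleDim (R : Type u) (M : Type v) [CommRing R] [AddCommGroup M]
    [Module R M] : WithBot ℕ∞ :=
  ringKrullDim (R ⧸ Module.annihilator R M)

universe u

variable {R : Type u} [CommRing R]

/-- A prime filtration of a module, with the multiset of primes occurring. -/
inductive PrimeFilt (R : Type u) [CommRing R] :
    ∀ (M : Type u) [AddCommGroup M] [Module R M], Multiset (Ideal R) → Prop
  | nil (M : Type u) [AddCommGroup M] [Module R M] (h : Subsingleton M) : PrimeFilt R M 0
  | cons (M : Type u) [AddCommGroup M] [Module R M] (q : Ideal R) (hq : q.IsPrime)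
      (s : Multiset (Ideal R)) (N : Submodule R M) (e : (M ⧸ N) ≃ₗ[R] (R ⧸ q))
      (hN : PrimeFilt R N s) : PrimeFilt R M (q ::ₘ s)

theorem PrimeFilt.congr {M : Type u} [AddCommGroup M] [Module R M] {s : Multiset (Ideal R)}
    (h : PrimeFilt R M s) :
    ∀ {M' : Type u} [AddCommGroup M'] [Module R M'] (e : M ≃ₗ[R] M'), PrimeFilt R M' s := by
  induction h with
  | nil M hM =>
    intro M' _ _ e
    exact .nil _ (e.symm.toEquiv.subsingleton)
  | cons M q hq s N e0 hN ih =>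
    intro M' _ _ e
    exact .cons M' q hq s (N.map (e : M →ₗ[R] M'))
      ((Submodule.Quotient.equiv (σ₁₂ := RingHom.id R) N (N.map (e : M →ₗ[R] M')) e rfl).symm.trans e0) (ih (e.submoduleMap N))

theorem PrimeFilt.prime_and_ann {M : Type u} [AddCommGroup M] [Module R M]
    {s : Multiset (Ideal R)} (h : PrimeFilt R M s) :
    ∀ q ∈ s, q.IsPrime ∧ Module.annihilator R M ≤ q := by
  induction h with
  | nil M hM => intro q hq; simp at hq
  | cons M q hq s N e0 hN ih =>
    intro q' hq'
    rcases Multiset.mem_cons.mp hq' with rfl | hq's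
    · refine ⟨hq, fun r hr => ?_⟩
      have hr' := Module.mem_annihilator.mp hr
      have h1 : r • ((Submodule.Quotient.mk (1:R)) : R ⧸ (q' : Ideal R)) = 0 := by
        have : ∀ z : M ⧸ N, r • z = 0 := by
          intro z
          obtain ⟨z₀, rfl⟩ := Submodule.Quotient.mk_surjective N z
          rw [← Submodule.Quotient.mk_smul, hr' z₀, Submodule.Quotient.mk_zero]
        calc r • ((Submodule.Quotient.mk (1:R)) : R ⧸ (q' : Ideal R))
            = r • e0 (e0.symm (Submodule.Quotient.mk (1:R))) := by rw [e0.apply_symm_apply]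
          _ = e0 (r • e0.symm (Submodule.Quotient.mk (1:R))) := by rw [map_smul]
          _ = 0 := by rw [this, map_zero]
      rw [← Submodule.Quotient.mk_smul, smul_eq_mul, mul_one] at h1
      exact (Submodule.Quotient.mk_eq_zero _).mp h1
    · refine (ih q' hq's).imp_right (le_trans ?_)
      intro r hr
      rw [Module.mem_annihilator] at hr ⊢
      intro n
      exact Subtype.ext (by simpa using hr (n : M))

open Order

/-- If chains in `β` have length at most `m`, chains in `γ` length at most `n`, and
`f`, `g` are jointly "strictly monotone", then chains in `α` have length at most `m + n`. -/
lemma chain_bound {α β γ : Type*} [PartialOrder α] [PartialOrder β] [PartialOrder γ]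
    {f : α → β} {g : α → γ} (hf : Monotone f) (hg : Monotone g)
    (hfg : ∀ ⦃x y : α⦄, x < y → f x = f y → g x = g y → x = y)
    {m n : ℕ} (hβ : ∀ c : LTSeries β, c.length ≤ m) (hγ : ∀ c : LTSeries γ, c.length ≤ n)
    (c : LTSeries α) : c.length ≤ m + n := by
  have hb : ∀ b : β, Order.height b ≤ (m : ℕ∞) :=
    fun b => Order.height_le_iff.mpr fun p _ => Nat.cast_le.mpr (hβ p)
  have hc : ∀ x : γ, Order.height x ≤ (n : ℕ∞) :=
    fun x => Order.height_le_iff.mpr fun p _ => Nat.cast_le.mpr (hγ p)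
  have key : ∀ i : Fin (c.length + 1),
      ((i : ℕ) : ℕ∞) ≤ Order.height (f (c i)) + Order.height (g (c i)) := by
    intro i
    induction i using Fin.induction with
    | zero => simp
    | succ i ih =>
      have hlt := c.step i
      have hle1 : f (c i.castSucc) ≤ f (c i.succ) := hf hlt.le
      have hle2 : g (c i.castSucc) ≤ g (c i.succ) := hg hlt.le
      have hcast : (i.succ.val : ℕ∞) = ((i.val : ℕ) : ℕ∞) + 1 := by rw [Fin.val_succ]; push_cast; ring
      rcases eq_or_lt_of_le hle1 with heq1 | hlt1
      · rcases eq_or_lt_of_le hle2 with heq2 | hlt2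
        · exact absurd (hfg hlt heq1 heq2) hlt.ne
        · have hfin : Order.height (g (c i.castSucc)) < ⊤ :=
            lt_of_le_of_lt (hc _) (by exact_mod_cast ENat.coe_lt_top n)
          have hbump : Order.height (g (c i.castSucc)) + 1 ≤ Order.height (g (c i.succ)) :=
            (ENat.add_one_le_iff hfin.ne).mpr (Order.height_strictMono hlt2 hfin)
          calc (i.succ.val : ℕ∞)
              = ((i.val : ℕ) : ℕ∞) + 1 := hcast
            _ ≤ (Order.height (f (c i.castSucc)) + Order.height (g (c i.castSucc))) + 1 := by
                exact add_le_add_left ih 1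
            _ = Order.height (f (c i.castSucc)) + (Order.height (g (c i.castSucc)) + 1) := by
                rw [add_assoc]
            _ ≤ Order.height (f (c i.succ)) + Order.height (g (c i.succ)) :=
                add_le_add (Order.height_mono (heq1 ▸ le_refl _)) hbump
      · have hfin : Order.height (f (c i.castSucc)) < ⊤ :=
          lt_of_le_of_lt (hb _) (by exact_mod_cast ENat.coe_lt_top m)
        have hbump : Order.height (f (c i.castSucc)) + 1 ≤ Order.height (f (c i.succ)) :=
          (ENat.add_one_le_iff hfin.ne).mpr (Order.height_strictMono hlt1 hfin)
        calc (i.succ.val : ℕ∞)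
            = ((i.val : ℕ) : ℕ∞) + 1 := hcast
          _ ≤ (Order.height (f (c i.castSucc)) + Order.height (g (c i.castSucc))) + 1 := by
              exact add_le_add_left ih 1
          _ = (Order.height (f (c i.castSucc)) + 1) + Order.height (g (c i.castSucc)) := by
              rw [add_right_comm]
          _ ≤ Order.height (f (c i.succ)) + Order.height (g (c i.succ)) :=
              add_le_add hbump (Order.height_mono hle2)
  have := key (Fin.last c.length)
  rw [Fin.val_last] at this
  have hfin : (c.length : ℕ∞) ≤ (m : ℕ∞) + (n : ℕ∞) :=
    this.trans (add_le_add (hb _) (hc _))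
  exact_mod_cast hfin


lemma localizedMap_exact (S : Submonoid R) {M N P : Type u}
    [AddCommGroup M] [Module R M] [AddCommGroup N] [Module R N] [AddCommGroup P] [Module R P]
    (g : M →ₗ[R] N) (h : N →ₗ[R] P) (hexact : Function.Exact g h) :
    Function.Exact (LocalizedModule.map S g) (LocalizedModule.map S h) := by
  have e1 : ⇑(LocalizedModule.map S g) = ⇑(IsLocalizedModule.map S
      (LocalizedModule.mkLinearMap S M) (LocalizedModule.mkLinearMap S N) g) := by
    funext x
    induction x using LocalizedModule.induction_on with
    | _ a b => rw [LocalizedModule.map_mk, IsLocalizedModule.map_LocalizedModules]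
  have e2 : ⇑(LocalizedModule.map S h) = ⇑(IsLocalizedModule.map S
      (LocalizedModule.mkLinearMap S N) (LocalizedModule.mkLinearMap S P) h) := by
    funext x
    induction x using LocalizedModule.induction_on with
    | _ a b => rw [LocalizedModule.map_mk, IsLocalizedModule.map_LocalizedModules]
  have := LocalizedModule.map_exact S g h hexact
  rw [show (⇑(IsLocalizedModule.map S (LocalizedModule.mkLinearMap S M)
      (LocalizedModule.mkLinearMap S N) g)) = ⇑(LocalizedModule.map S g) from e1.symm,
    show (⇑(IsLocalizedModule.map S (LocalizedModule.mkLinearMap S N)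
      (LocalizedModule.mkLinearMap S P) h)) = ⇑(LocalizedModule.map S h) from e2.symm] at this
  exact this

section ResField

variable (p : Ideal R) [p.IsPrime]

lemma resfield_nontrivial :
    Nontrivial (LocalizedModule p.primeCompl (R ⧸ p)) := by
  refine ⟨LocalizedModule.mk (Submodule.Quotient.mk 1) 1, 0, fun h => ?_⟩
  rw [show (0 : LocalizedModule p.primeCompl (R ⧸ p)) = LocalizedModule.mk 0 1 from
    (LocalizedModule.zero_mk 1).symm, LocalizedModule.mk_eq] at h
  obtain ⟨u, hu⟩ := h
  rw [smul_zero, smul_zero] at hu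
  have : ((u : R) • (Submodule.Quotient.mk 1 : R ⧸ p)) = 0 := by
    simpa [Submonoid.smul_def] using hu
  rw [← Submodule.Quotient.mk_smul, smul_eq_mul, mul_one, Submodule.Quotient.mk_eq_zero] at this
  exact u.2 this

lemma resfield_submodule_eq_bot_or_top
    (W : Submodule (Localization.AtPrime p) (LocalizedModule p.primeCompl (R ⧸ p))) :
    W = ⊥ ∨ W = ⊤ := by
  by_cases hW : W = ⊥
  · exact Or.inl hW
  right
  obtain ⟨z, hzW, hz0⟩ : ∃ z ∈ W, z ≠ 0 := by
    by_contra hcon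
    push_neg at hcon
    exact hW ((Submodule.eq_bot_iff W).mpr hcon)
  obtain ⟨x, u, rfl⟩ : ∃ x u, LocalizedModule.mk x u = z :=
    LocalizedModule.induction_on (fun a b => ⟨a, b, rfl⟩) z
  obtain ⟨x₀, rfl⟩ := Submodule.Quotient.mk_surjective _ x
  have hx₀ : x₀ ∈ p.primeCompl := by
    intro hmem
    apply hz0
    rw [(Submodule.Quotient.mk_eq_zero _).mpr hmem, LocalizedModule.zero_mk]
  rw [eq_top_iff]
  rintro w -
  obtain ⟨y, v, rfl⟩ : ∃ y v, LocalizedModule.mk y v = w :=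
    LocalizedModule.induction_on (fun a b => ⟨a, b, rfl⟩) w
  obtain ⟨y₀, rfl⟩ := Submodule.Quotient.mk_surjective _ y
  have hmem : (x₀ * (v : R)) ∈ p.primeCompl := mul_mem hx₀ v.2
  have hkey : (Localization.mk (y₀ * (u : R)) ⟨x₀ * (v : R), hmem⟩ : Localization.AtPrime p) •
      LocalizedModule.mk (Submodule.Quotient.mk x₀ : R ⧸ p) u
      = LocalizedModule.mk (Submodule.Quotient.mk y₀ : R ⧸ p) v := by
    rw [LocalizedModule.mk_smul_mk, LocalizedModule.mk_eq]
    refine ⟨1, ?_⟩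
    simp only [Submonoid.smul_def, Submonoid.coe_mul, one_smul, ← Submodule.Quotient.mk_smul,
      smul_eq_mul]
    congr 1
    ring
  exact hkey ▸ W.smul_mem _ hzW

lemma resfield_chain_le_one
    (c : LTSeries (Submodule (Localization.AtPrime p) (LocalizedModule p.primeCompl (R ⧸ p)))) :
    c.length ≤ 1 := by
  by_contra hcon
  push_neg at hcon
  have h2 : 2 ≤ c.length := hcon
  have h01 : c ⟨0, by omega⟩ < c ⟨1, by omega⟩ := c.strictMono (by simp [Fin.lt_def])
  have h12 : c ⟨1, by omega⟩ < c ⟨2, by omega⟩ := c.strictMono (by simp [Fin.lt_def])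
  rcases resfield_submodule_eq_bot_or_top p (c ⟨1, by omega⟩) with hb | ht
  · rw [hb] at h01; exact not_lt_bot h01
  · rw [ht] at h12; exact not_top_lt h12

lemma subsingleton_localized_of_notle (q : Ideal R) (hnle : ¬ q ≤ p) :
    Subsingleton (LocalizedModule p.primeCompl (R ⧸ q)) := by
  obtain ⟨c0, hc0q, hc0p⟩ := SetLike.not_le_iff_exists.mp hnle
  have hzero : ∀ z : LocalizedModule p.primeCompl (R ⧸ q), z = 0 := by
    intro z
    induction z using LocalizedModule.induction_on with
    | _ x su =>
      rw [show (0 : LocalizedModule p.primeCompl (R ⧸ q)) = LocalizedModule.mk 0 su from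
        (LocalizedModule.zero_mk su).symm, LocalizedModule.mk_eq]
      refine ⟨⟨c0, hc0p⟩, ?_⟩
      obtain ⟨y₀, hy₀⟩ := Submodule.Quotient.mk_surjective _ ((su : R) • x)
      rw [smul_zero, smul_zero, Submonoid.smul_def, Submonoid.smul_def, ← hy₀,
        ← Submodule.Quotient.mk_smul, smul_eq_mul, Submodule.Quotient.mk_eq_zero]
      exact q.mul_mem_right y₀ hc0q
  exact ⟨fun a b => (hzero a).trans (hzero b).symm⟩

end ResField

theorem PrimeFilt.localized {M : Type u} [AddCommGroup M] [Module R M] {s : Multiset (Ideal R)}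
    (h : PrimeFilt R M s) (p : Ideal R) [hp : p.IsPrime] [DecidableEq (Ideal R)] :
    (∀ q ∈ s, q ≤ p → q = p) →
    (∀ c : LTSeries (Submodule (Localization.AtPrime p) (LocalizedModule p.primeCompl M)),
        c.length ≤ s.count p) ∧
    (∃ c : LTSeries (Submodule (Localization.AtPrime p) (LocalizedModule p.primeCompl M)),
        c.head = ⊥ ∧ c.last = ⊤ ∧ c.length = s.count p) := by
  induction h with
  | nil M hM =>
    intro _
    have hsub : Subsingleton (LocalizedModule p.primeCompl M) := by
      refine ⟨fun a b => ?_⟩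
      have hz : ∀ z : LocalizedModule p.primeCompl M, z = 0 := by
        intro z
        induction z using LocalizedModule.induction_on with
        | _ m t => rw [Subsingleton.elim m 0, LocalizedModule.zero_mk]
      rw [hz a, hz b]
    have hsubS : Subsingleton (Submodule (Localization.AtPrime p)
        (LocalizedModule p.primeCompl M)) := Submodule.subsingleton_iff _ |>.mpr hsub
    constructor
    · intro c
      rcases Nat.eq_zero_or_pos c.length with h0 | h0
      · simp [h0]
      · have := c.step ⟨0, h0⟩
        exact absurd (Subsingleton.elim _ _ : c.toFun _ = c.toFun _) this.ne
    · exact ⟨RelSeries.singleton _ ⊥, rfl, Subsingleton.elim _ _, by simp⟩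
  | cons M q hq s N e hN ih =>
    intro hsp
    have hsp' : ∀ q' ∈ s, q' ≤ p → q' = p :=
      fun q' hq' => hsp q' (Multiset.mem_cons_of_mem hq')
    obtain ⟨ihb, ihe⟩ := ih hsp'
    set S := p.primeCompl
    set ι : N →ₗ[R] M := N.subtype with hι
    set π : M →ₗ[R] (R ⧸ q) := e.toLinearMap ∘ₗ N.mkQ with hπ
    have hexact0 : Function.Exact ι π := by
      intro y
      exact Iff.trans (LinearEquiv.map_eq_zero_iff e) (LinearMap.exact_subtype_mkQ N y)
    set ιp := LocalizedModule.map S ι with hιp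
    set πp := LocalizedModule.map S π with hπp
    have hinj : Function.Injective ιp :=
      LocalizedModule.map_injective S ι N.injective_subtype
    have hsurj : Function.Surjective πp :=
      LocalizedModule.map_surjective S π (e.surjective.comp (Submodule.mkQ_surjective N))
    have hex : Function.Exact ιp πp := localizedMap_exact S ι π hexact0
    have hker : LinearMap.ker πp = LinearMap.range ιp := LinearMap.exact_iff.mp hex
    by_cases hqp : q = p
    · subst hqp
      -- quotient is the residue field
      constructor
      · intro c
        have hγ := resfield_chain_le_one q
        have hbound := chain_bound (f := fun W => W.comap ιp) (g := fun W => W.map πp)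
          (fun _ _ hxy => Submodule.comap_mono hxy) (fun _ _ hxy => Submodule.map_mono hxy)
          ?_ ihb hγ c
        · rw [Multiset.count_cons_self]; omega
        · intro x y hxy h1 h2
          replace h1 : Submodule.comap ιp x = Submodule.comap ιp y := h1
          replace h2 : Submodule.map πp x = Submodule.map πp y := h2
          refine le_antisymm hxy.le fun v hv => ?_
          have : πp v ∈ Submodule.map πp x := by
            rw [h2]; exact ⟨v, hv, rfl⟩
          obtain ⟨u', hu'x, hu'⟩ := this
          have hvu : v - u' ∈ LinearMap.ker πp := by
            rw [LinearMap.mem_ker, map_sub, hu', sub_self]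
          rw [hker] at hvu
          obtain ⟨w, hw⟩ := hvu
          have hwy : w ∈ Submodule.comap ιp y := by
            rw [Submodule.mem_comap, hw]
            exact y.sub_mem hv (hxy.le hu'x)
          rw [← h1, Submodule.mem_comap, hw] at hwy
          have hv' : u' + (v - u') = v := by abel
          rw [← hv']
          exact x.add_mem hu'x hwy
      · obtain ⟨c, hh, hl, hlen⟩ := ihe
        have hmapsm : StrictMono (Submodule.map ιp) := Submodule.map_strictMono_of_injective hinj
        have hrange_ne : LinearMap.range ιp ≠ ⊤ := by
          intro htop
          have : ∀ z, πp z = 0 := by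
            intro z
            have : z ∈ LinearMap.ker πp := by rw [hker, htop]; trivial
            exact this
          obtain ⟨a, b, hab⟩ := resfield_nontrivial q
          obtain ⟨a', ha'⟩ := hsurj a
          obtain ⟨b', hb'⟩ := hsurj b
          exact hab (by rw [← ha', ← hb', this a', this b'])
        refine ⟨(c.map (Submodule.map ιp) hmapsm).snoc ⊤ ?_, ?_, ?_, ?_⟩
        · rw [LTSeries.last_map, hl, Submodule.map_top]
          exact lt_top_iff_ne_top.mpr hrange_ne
        · rw [RelSeries.head_snoc, LTSeries.head_map, hh, Submodule.map_bot]
        · rw [RelSeries.last_snoc]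
        · simp [Multiset.count_cons_self, hlen]
    · -- q ≠ p : localization of R⧸q vanishes
      have hnle : ¬ q ≤ p := fun hle => hqp (hsp q (Multiset.mem_cons_self q s) hle)
      have hsub : Subsingleton (LocalizedModule S (R ⧸ q)) :=
        subsingleton_localized_of_notle p q hnle
      have hrange : LinearMap.range ιp = ⊤ := by
        rw [← hker]
        rw [eq_top_iff]
        intro z _
        rw [LinearMap.mem_ker]
        exact Subsingleton.elim _ _
      have hbij : Function.Bijective ιp := ⟨hinj, LinearMap.range_eq_top.mp hrange⟩
      set eL := LinearEquiv.ofBijective ιp hbij with heL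
      set oi := Submodule.orderIsoMapComap eL with hoi
      have hcount : (q ::ₘ s).count p = s.count p := Multiset.count_cons_of_ne (Ne.symm hqp) s
      constructor
      · intro c
        have := ihb (c.map oi.symm oi.symm.strictMono)
        rw [hcount]
        exact this
      · obtain ⟨c, hh, hl, hlen⟩ := ihe
        refine ⟨c.map oi oi.strictMono, ?_, ?_, ?_⟩
        · rw [LTSeries.head_map, hh, OrderIso.map_bot]
        · rw [LTSeries.last_map, hl, OrderIso.map_top]
        · rw [hcount]; exact hlen

lemma moduleDim_le_of_dim {d : ℕ} (hdim : ringKrullDim R = d) (X : Type v) [AddCommGroup X]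
    [Module R X] : moduleDim R X ≤ (d : WithBot ℕ∞) :=
  le_of_le_of_eq (ringKrullDim_quotient_le (Module.annihilator R X)) hdim

theorem PrimeFilt.phi {d : ℕ} (hdim : ringKrullDim R = d)
    (φ : ModuleCat.{u} R → ℤ)
    (hadd : ∀ (M N P : ModuleCat.{u} R) (f : M →ₗ[R] N) (g : N →ₗ[R] P),
      Function.Injective f → Function.Surjective g → Function.Exact f g →
      Module.Finite R M → Module.Finite R N → Module.Finite R P →
      moduleDim R M ≤ d → moduleDim R N ≤ d → moduleDim R P ≤ d →
      φ N = φ M + φ P)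
    (hvanish : ∀ M : ModuleCat.{u} R, Module.Finite R M → moduleDim R M < d → φ M = 0)
    [IsNoetherianRing R]
    {M : Type u} [AddCommGroup M] [Module R M] {s : Multiset (Ideal R)}
    (h : PrimeFilt R M s) :
    Module.Finite R M →
    φ (ModuleCat.of R M) = (s.map fun q => φ (ModuleCat.of R (R ⧸ q))).sum := by
  induction h with
  | nil M hM =>
    intro hfin
    have hann : Module.annihilator R M = ⊤ :=
      eq_top_iff.mpr fun r _ => Module.mem_annihilator.mpr fun m => Subsingleton.elim _ _
    have hsub : Subsingleton (R ⧸ (⊤ : Ideal R)) := by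
      refine ⟨fun a b => ?_⟩
      obtain ⟨x, rfl⟩ := Submodule.Quotient.mk_surjective _ a
      obtain ⟨y, rfl⟩ := Submodule.Quotient.mk_surjective _ b
      exact (Submodule.Quotient.eq _).mpr trivial
    have hlt : moduleDim R M < (d : WithBot ℕ∞) := by
      unfold moduleDim
      rw [hann, ringKrullDim_eq_bot_of_subsingleton]
      exact bot_lt_iff_ne_bot.mpr (by exact_mod_cast (by simp : (d : WithBot ℕ∞) ≠ ⊥))
    rw [hvanish (ModuleCat.of R M) hfin hlt]
    simp
  | cons M q hq s N e hN ih =>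
    intro hfin
    haveI := hfin
    haveI : IsNoetherian R M := isNoetherian_of_isNoetherianRing_of_finite R M
    have hNfin : Module.Finite R ↥N := Module.Finite.iff_fg.mpr (IsNoetherian.noetherian N)
    haveI := hNfin
    haveI : Module.Finite R (R ⧸ q) := inferInstance
    have hsurj : Function.Surjective (e.toLinearMap ∘ₗ N.mkQ) :=
      e.surjective.comp (Submodule.mkQ_surjective N)
    have hexact : Function.Exact N.subtype (e.toLinearMap ∘ₗ N.mkQ) := fun y =>
      Iff.trans (LinearEquiv.map_eq_zero_iff e) (LinearMap.exact_subtype_mkQ N y)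
    have hstep := hadd (ModuleCat.of R ↥N) (ModuleCat.of R M) (ModuleCat.of R (R ⧸ q))
      N.subtype (e.toLinearMap ∘ₗ N.mkQ) N.injective_subtype hsurj hexact
      hNfin hfin (inferInstanceAs (Module.Finite R (R ⧸ q))) (moduleDim_le_of_dim hdim _) (moduleDim_le_of_dim hdim _)
      (moduleDim_le_of_dim hdim _)
    rw [Multiset.map_cons, Multiset.sum_cons, hstep, ih hNfin]
    ring

theorem exists_primeFilt [IsNoetherianRing R] (E : Type u) [AddCommGroup E] [Module R E]
    [Module.Finite R E] : ∃ s : Multiset (Ideal R), PrimeFilt R E s := by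
  haveI : IsNoetherian R E := isNoetherian_of_isNoetherianRing_of_finite R E
  set 𝒮 : Set (Submodule R E) := {N | ∃ s, PrimeFilt R ↥N s} with h𝒮
  have hbot : (⊥ : Submodule R E) ∈ 𝒮 := by
    refine ⟨0, .nil _ ⟨fun a b => Subtype.ext ?_⟩⟩
    rw [(Submodule.mem_bot R).mp a.2, (Submodule.mem_bot R).mp b.2]
  obtain ⟨N, hN𝒮, hmax⟩ := (set_has_maximal_iff_noetherian.mpr ‹_›) 𝒮 ⟨⊥, hbot⟩
  rcases eq_or_ne N ⊤ with rfl | hne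
  · obtain ⟨s, hs⟩ := hN𝒮
    exact ⟨s, hs.congr (Submodule.topEquiv)⟩
  · exfalso
    have hlt : N < ⊤ := hne.lt_top
    haveI := Submodule.Quotient.nontrivial_iff.mpr hlt.ne
    obtain ⟨P, hP⟩ := associatedPrimes.nonempty R (E ⧸ N)
    obtain ⟨hPprime, x, hPx⟩ := isAssociatedPrime_iff.mp hP
    rw [Submodule.bot_colon'] at hPx
    have hx0 : x ≠ 0 := by
      rintro rfl
      rw [Submodule.span_zero_singleton, Submodule.annihilator_bot] at hPx
      exact hPprime.ne_top hPx
    obtain ⟨x₀, rfl⟩ := N.mkQ_surjective x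
    have hx₀N : x₀ ∉ N := fun hmem => hx0 ((Submodule.Quotient.mk_eq_zero N).mpr hmem)
    set N' : Submodule R E := N ⊔ (R ∙ x₀) with hN'
    have hle : N ≤ N' := le_sup_left
    have hx₀N' : x₀ ∈ N' := Submodule.mem_sup_right (Submodule.mem_span_singleton_self x₀)
    have hltN : N < N' := lt_of_le_of_ne hle (fun h => hx₀N (h ▸ hx₀N'))
    set x₀' : ↥N' := ⟨x₀, hx₀N'⟩ with hx₀'
    set N₀ : Submodule R ↥N' := N.comap N'.subtype with hN₀
    set ψ : R →ₗ[R] (↥N' ⧸ N₀) := N₀.mkQ ∘ₗ LinearMap.toSpanSingleton R ↥N' x₀' with hψ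
    have hψval : ∀ r : R, ψ r = Submodule.Quotient.mk (r • x₀') := fun r => rfl
    have hψsurj : Function.Surjective ψ := by
      intro z
      obtain ⟨w, rfl⟩ := Submodule.Quotient.mk_surjective N₀ z
      obtain ⟨n, hn, y, hy, hny⟩ := Submodule.mem_sup.mp w.2
      obtain ⟨r, rfl⟩ := Submodule.mem_span_singleton.mp hy
      refine ⟨r, ?_⟩
      rw [hψval, Submodule.Quotient.eq]
      have : ((r • x₀' - w : ↥N') : E) = r • x₀ - w := by simp; rfl
      refine Submodule.mem_comap.mpr ?_
      rw [N'.subtype_apply, this, ← hny]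
      simpa using hn
    have hψker : LinearMap.ker ψ = P := by
      ext r
      rw [LinearMap.mem_ker, hψval, Submodule.Quotient.mk_eq_zero, hPx,
        Submodule.mem_annihilator_span_singleton, Submodule.mem_comap]
      have h1 : ((r • x₀' : ↥N') : E) = r • x₀ := rfl
      rw [N'.subtype_apply, h1, ← Submodule.Quotient.mk_eq_zero N,
        show (Submodule.Quotient.mk (r • x₀) : E ⧸ N) = r • N.mkQ x₀ from by
          rw [← Submodule.mkQ_apply, map_smul]]
    obtain ⟨s, hs⟩ := hN𝒮
    have hfilt : PrimeFilt R ↥N' (P ::ₘ s) := by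
      refine PrimeFilt.cons ↥N' P hPprime s N₀ ?_ ?_
      · exact ((Submodule.quotEquivOfEq _ _ hψker.symm).trans
          (ψ.quotKerEquivOfSurjective hψsurj)).symm
      · exact hs.congr (Submodule.comapSubtypeEquivOfLe hle).symm
    exact hmax N' ⟨P ::ₘ s, hfilt⟩ hltN

lemma annihilator_quotient_ideal (I : Ideal R) : Module.annihilator R (R ⧸ I) = I := by
  ext r
  rw [Module.mem_annihilator]
  constructor
  · intro h
    have := h (Submodule.Quotient.mk 1)
    rwa [← Submodule.Quotient.mk_smul, smul_eq_mul, mul_one, Submodule.Quotient.mk_eq_zero] at this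
  · intro hr z
    obtain ⟨a, rfl⟩ := Submodule.Quotient.mk_surjective _ z
    rw [← Submodule.Quotient.mk_smul, smul_eq_mul, Submodule.Quotient.mk_eq_zero]
    exact I.mul_mem_right a hr

lemma minimal_of_dim_eq {d : ℕ} (hdim : ringKrullDim R = d) (A q : Ideal R) (hq : q.IsPrime)
    (hAq : A ≤ q) (hqd : ringKrullDim (R ⧸ q) = d) : q ∈ A.minimalPrimes := by
  refine ⟨⟨hq, hAq⟩, ?_⟩
  intro y hy hyq
  by_contra hqy
  have hylt : y < q := lt_of_le_of_ne hyq (fun h => hqy (le_of_eq h.symm))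
  haveI : Nontrivial (R ⧸ q) := Ideal.Quotient.nontrivial_iff.mpr hq.ne_top
  haveI : Nonempty (PrimeSpectrum (R ⧸ q)) := inferInstance
  have hqd' : (⨆ c : LTSeries (PrimeSpectrum (R ⧸ q)), (c.length : ℕ∞)) = (d : ℕ∞) := by
    have h1 := hqd
    rw [ringKrullDim, Order.krullDim_eq_iSup_length] at h1
    exact WithBot.coe_inj.mp (h1.trans
      (show ((d : ℕ) : WithBot ℕ∞) = ((d : ℕ∞) : WithBot ℕ∞) from rfl))
  have hex : ∃ c : LTSeries (PrimeSpectrum (R ⧸ q)), (c.length : ℕ∞) = (d : ℕ∞) := by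
    haveI : Nonempty (Set.range fun c : LTSeries (PrimeSpectrum (R ⧸ q)) => (c.length : ℕ∞)) :=
      Set.Nonempty.to_subtype (Set.range_nonempty _)
    have hmem := ENat.sSup_mem_of_nonempty_of_lt_top
      (s := Set.range fun c : LTSeries (PrimeSpectrum (R ⧸ q)) => (c.length : ℕ∞))
      (by rw [show sSup (Set.range fun c : LTSeries (PrimeSpectrum (R ⧸ q)) => (c.length : ℕ∞))
          = ⨆ c : LTSeries (PrimeSpectrum (R ⧸ q)), (c.length : ℕ∞) from rfl, hqd']
          exact ENat.coe_lt_top d)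
    obtain ⟨c, hc⟩ := hmem
    exact ⟨c, hc.trans hqd'⟩
  obtain ⟨c, hc⟩ := hex
  have hclen : c.length = d := by exact_mod_cast hc
  have hsm : StrictMono (PrimeSpectrum.comap (Ideal.Quotient.mk q)) := by
    have hmono : Monotone (PrimeSpectrum.comap (Ideal.Quotient.mk q)) :=
      fun a b hab => Ideal.comap_mono hab
    exact hmono.strictMono_of_injective
      (PrimeSpectrum.comap_injective_of_surjective _ Ideal.Quotient.mk_surjective)
  have hqle : q ≤ (PrimeSpectrum.comap (Ideal.Quotient.mk q) c.head).asIdeal := by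
    intro r hr
    rw [PrimeSpectrum.comap_asIdeal, Ideal.mem_comap, Ideal.Quotient.eq_zero_iff_mem.mpr hr]
    exact zero_mem _
  have hrel : (⟨y, hy.1⟩ : PrimeSpectrum R) < (c.map _ hsm).head := by
    rw [LTSeries.head_map]
    rw [← PrimeSpectrum.asIdeal_lt_asIdeal]
    exact lt_of_lt_of_le hylt hqle
  have hle := LTSeries.length_le_krullDim ((c.map _ hsm).cons ⟨y, hy.1⟩ hrel)
  rw [show Order.krullDim (PrimeSpectrum R) = ringKrullDim R from rfl, hdim] at hle
  have hlen2 : ((c.map (PrimeSpectrum.comap (Ideal.Quotient.mk q)) hsm).cons ⟨y, hy.1⟩ hrel).length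
      = d + 1 := by
    simp [hclen]
  rw [hlen2] at hle
  have : (d + 1 : ℕ) ≤ d := by exact_mod_cast hle
  omega

/-- Let `R` be a Noetherian local ring of dimension `d` and `E` a finitely generated
`R`-module of dimension `d` with minimal primes `p₁,…,p_r` of maximal dimension `d`.
For any additive function `φ` on finitely generated modules of dimension `≤ d` vanishing on
those of dimension `< d`, one has `φ(E) = ∑ᵢ φ(R/pᵢ) · L(E_{pᵢ})`. -/
theorem additive_function_eq_sum_minimal_primes {R : Type u} [CommRing R]
    [IsNoetherianRing R] [IsLocalRing R] (d : ℕ) (hdim : ringKrullDim R = d)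
    (E : Type u) [AddCommGroup E] [Module R E] [Module.Finite R E]
    (hE : moduleDim R E = d)
    (φ : ModuleCat.{u} R → ℤ)
    (hadd : ∀ (M N P : ModuleCat.{u} R) (f : M →ₗ[R] N) (g : N →ₗ[R] P),
      Function.Injective f → Function.Surjective g → Function.Exact f g →
      Module.Finite R M → Module.Finite R N → Module.Finite R P →
      moduleDim R M ≤ d → moduleDim R N ≤ d → moduleDim R P ≤ d →
      φ N = φ M + φ P)
    (hvanish : ∀ M : ModuleCat.{u} R, Module.Finite R M → moduleDim R M < d → φ M = 0)
    (ps : Finset (Ideal R))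
    (hps : ∀ p : Ideal R, p ∈ ps ↔
      p ∈ (Module.annihilator R E).minimalPrimes ∧ ringKrullDim (R ⧸ p) = d)
    (hprime : ∀ p ∈ ps, p.IsPrime) :
    φ (ModuleCat.of R E) =
      ∑ p ∈ ps.attach,
        φ (ModuleCat.of R (R ⧸ (p : Ideal R))) *
          ((moduleLength (Localization.AtPrime (p : Ideal R)
              (hp := hprime p p.2))
            (LocalizedModule ((p : Ideal R).primeCompl (hp := hprime p p.2)) E)).toNat : ℤ) := by
  letI : DecidableEq (Ideal R) := Classical.decEq _
  obtain ⟨s, hs⟩ := exists_primeFilt (R := R) E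
  have hφE := hs.phi hdim φ hadd hvanish ‹Module.Finite R E›
  have hpa := hs.prime_and_ann
  set F : Ideal R → ℤ := fun q => φ (ModuleCat.of R (R ⧸ q)) with hF
  have hA : ∑ p ∈ ps.attach,
        φ (ModuleCat.of R (R ⧸ (p : Ideal R))) *
          ((moduleLength (Localization.AtPrime (p : Ideal R)
              (hp := hprime p p.2))
            (LocalizedModule ((p : Ideal R).primeCompl (hp := hprime p p.2)) E)).toNat : ℤ)
      = ∑ p ∈ ps, F p * (s.count p : ℤ) := by
    rw [← Finset.sum_attach ps (fun q => F q * (s.count q : ℤ))]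
    refine Finset.sum_congr rfl (fun p _ => ?_)
    haveI hPp := hprime p p.2
    have hmin : (p : Ideal R) ∈ (Module.annihilator R E).minimalPrimes :=
      ((hps p).mp p.2).1
    have hsp : ∀ q ∈ s, q ≤ (p : Ideal R) → q = (p : Ideal R) := fun q hq hqp =>
      le_antisymm hqp (hmin.2 ⟨(hpa q hq).1, (hpa q hq).2⟩ hqp)
    obtain ⟨hb, c, hch, hcl, hclen⟩ := hs.localized (p : Ideal R) hsp
    have hkd : Order.krullDim (Submodule (Localization.AtPrime (p : Ideal R))
        (LocalizedModule (p : Ideal R).primeCompl E)) = ((s.count (p : Ideal R) : ℕ∞) : WithBot ℕ∞) := by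
      apply le_antisymm
      · rw [Order.krullDim_eq_iSup_length]
        exact WithBot.coe_le_coe.mpr (iSup_le fun c' => Nat.cast_le.mpr (hb c'))
      · have h2 := LTSeries.length_le_krullDim c
        rw [hclen] at h2
        exact_mod_cast h2
    have h' : moduleLength (Localization.AtPrime (p : Ideal R))
        (LocalizedModule (p : Ideal R).primeCompl E) = (s.count (p : Ideal R) : ℕ∞) := by
      unfold moduleLength
      rw [hkd]
      rfl
    have h'' : (moduleLength (Localization.AtPrime (p : Ideal R))
        (LocalizedModule (p : Ideal R).primeCompl E)).toNat = s.count (p : Ideal R) := by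
      rw [h']; simp
    congr 1
    exact_mod_cast h''
  refine Eq.trans hφE (Eq.trans ?_ hA.symm)
  -- multiset sum = sum over ps
  have hvan : ∀ m ∈ s, m ∉ ps → F m = 0 := by
    intro m hm hmps
    have hprm := (hpa m hm).1
    have hann := (hpa m hm).2
    have hdle : ringKrullDim (R ⧸ m) ≤ (d : WithBot ℕ∞) := hdim ▸ ringKrullDim_quotient_le m
    have hne : ringKrullDim (R ⧸ m) ≠ (d : WithBot ℕ∞) := by
      intro heq
      exact hmps ((hps m).mpr ⟨minimal_of_dim_eq hdim _ m hprm hann heq, heq⟩)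
    refine hvanish (ModuleCat.of R (R ⧸ m)) (inferInstanceAs (Module.Finite R (R ⧸ m))) ?_
    show moduleDim R (R ⧸ m) < (d : WithBot ℕ∞)
    unfold moduleDim
    rw [annihilator_quotient_ideal]
    exact lt_of_le_of_ne hdle hne
  rw [Finset.sum_multiset_map_count]
  rw [show ∑ m ∈ s.toFinset, s.count m • F m = ∑ m ∈ s.toFinset ∪ ps, s.count m • F m from
    Finset.sum_subset Finset.subset_union_left (fun m _ hmns => by
      rw [Multiset.count_eq_zero.mpr (fun hins => hmns (Multiset.mem_toFinset.mpr hins)),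
        zero_smul])]
  rw [show ∑ p ∈ ps, F p * (s.count p : ℤ) = ∑ p ∈ s.toFinset ∪ ps, F p * (s.count p : ℤ) from
    Finset.sum_subset Finset.subset_union_right (fun m hmu hmps => by
      rcases Finset.mem_union.mp hmu with hms | hms
      · rw [hvan m (Multiset.mem_toFinset.mp hms) hmps, zero_mul]
      · exact absurd hms hmps)]
  refine Finset.sum_congr rfl (fun m _ => ?_)
  rw [nsmul_eq_mul, mul_comm]
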